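/- Let G be a connected multigraph on n ≥ 2 vertices, let r be an integer with 2 ≤ r ≤ n, and let α ≥ 1 be a real number. Then the number of distinct α-minimum r-way cuts of G is at most (rn)^{2α(r−1)}. -/

import Mathlib

open scoped Classical

/-- A multigraph on vertex type `V` is given by an edge-index type `E` together with a map
`ends : E → Sym2 V` assigning to each edge its (unordered) pair of endpoints; the hypothesis
`∀ e, ¬ (ends e).IsDiag` says that the two endpoints of every edge are distinct.
`survGraph ends F` is the simple graph on `V` whose adjacencies are given by the edges of the
multigraph that survive when the edges in `F` fail. -/
def survGraph {V E : Type} (ends : E → Sym2 V) (F : Finset E) : SimpleGraph V :=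
  SimpleGraph.fromRel (fun x y => ∃ e, e ∉ F ∧ ends e = s(x, y))

/-- The number of connected components of the graph surviving after the edges in `F` fail. -/
noncomputable def numComponents {V E : Type} (ends : E → Sym2 V) (F : Finset E) : ℕ :=
  Nat.card (survGraph ends F).ConnectedComponent

/-- Edge `e` crosses the 2-way cut determined by the vertex set `A` (one endpoint in `A`,
one endpoint outside `A`). -/
def crosses {V E : Type} (ends : E → Sym2 V) (A : Finset V) (e : E) : Prop :=
  (∃ x ∈ ends e, x ∈ A) ∧ (∃ x ∈ ends e, x ∉ A)

/-- The edge set of the 2-way cut determined by the vertex set `A`. -/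
noncomputable def cutEdges {V E : Type} [Fintype E] (ends : E → Sym2 V) (A : Finset V) :
    Finset E :=
  Finset.univ.filter (crosses ends A)

/-- The value of the 2-way cut determined by the vertex set `A`. -/
noncomputable def cutValue {V E : Type} [Fintype E] (ends : E → Sym2 V) (A : Finset V) : ℕ :=
  (cutEdges ends A).card

/-- When each edge fails independently with probability `p`, this is the probability that the
(random) set of failed edges is a member of `S`. -/
noncomputable def failurePr {E : Type} [Fintype E] (p : ℝ) (S : Finset (Finset E)) : ℝ :=
  ∑ F ∈ S, p ^ F.card * (1 - p) ^ (Fintype.card E - F.card)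

/-- `P` is a partition of the vertex set into `r` (pairwise disjoint) nonempty parts. -/
def IsPartitionInto {V : Type} (P : Finset (Finset V)) (r : ℕ) : Prop :=
  P.card = r ∧ (∀ A ∈ P, A.Nonempty) ∧
    (∀ A ∈ P, ∀ B ∈ P, A ≠ B → Disjoint A B) ∧ (∀ x : V, ∃ A ∈ P, x ∈ A)

/-- Edge `e` crosses the multiway cut determined by the partition `P`
(its endpoints lie in different parts). -/
def rCrosses {V E : Type} (ends : E → Sym2 V) (P : Finset (Finset V)) (e : E) : Prop :=
  ¬ ∃ A ∈ P, ∀ x ∈ ends e, x ∈ A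

/-- The edge set of the multiway cut determined by the partition `P`. -/
noncomputable def rCutEdges {V E : Type} [Fintype E] (ends : E → Sym2 V)
    (P : Finset (Finset V)) : Finset E :=
  Finset.univ.filter (rCrosses ends P)

/-- The value of the multiway cut determined by the partition `P`. -/
noncomputable def rCutValue {V E : Type} [Fintype E] (ends : E → Sym2 V)
    (P : Finset (Finset V)) : ℕ :=
  (rCutEdges ends P).card

set_option linter.unusedSectionVars false
set_option maxHeartbeats 1000000


section Count

open Finset

variable {V : Type} [Fintype V] [DecidableEq V]

noncomputable def partOf (P : Finset (Finset V)) (v : V) : Finset V :=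
  if h : ∃ A ∈ P, v ∈ A then h.choose else ∅

lemma partOf_spec {P : Finset (Finset V)} {v : V} (h : ∃ A ∈ P, v ∈ A) :
    partOf P v ∈ P ∧ v ∈ partOf P v := by
  rw [partOf, dif_pos h]
  exact ⟨h.choose_spec.1, h.choose_spec.2⟩

lemma partOf_eq {P : Finset (Finset V)} (hP : IsPartitionInto P r) {v : V} {A : Finset V}
    (hA : A ∈ P) (hv : v ∈ A) : partOf P v = A := by
  have h : ∃ A ∈ P, v ∈ A := ⟨A, hA, hv⟩
  obtain ⟨h1, h2⟩ := partOf_spec h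
  by_contra hne
  exact (Finset.disjoint_left.1 (hP.2.2.1 _ h1 _ hA hne) h2) hv

noncomputable def pidx [LinearOrder V] (P : Finset (Finset V)) (A : Finset V) : ℕ :=
  (P.filter (fun B => B.min < A.min)).card

lemma pidx_lt [LinearOrder V] {P : Finset (Finset V)} {r : ℕ} (hP : IsPartitionInto P r)
    {A : Finset V} (hA : A ∈ P) : pidx P A < r := by
  have hsub : P.filter (fun B => B.min < A.min) ⊆ P.erase A := by
    intro B hB
    simp only [mem_filter] at hB
    exact Finset.mem_erase.2 ⟨fun h => by simp [h] at hB, hB.1⟩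
  calc pidx P A ≤ (P.erase A).card := Finset.card_le_card hsub
    _ < P.card := Finset.card_erase_lt_of_mem hA
    _ = r := hP.1

lemma pidx_inj [LinearOrder V] {P : Finset (Finset V)} {r : ℕ} (hP : IsPartitionInto P r)
    {A B : Finset V} (hA : A ∈ P) (hB : B ∈ P) (h : pidx P A = pidx P B) : A = B := by
  by_contra hne
  have hmin : A.min ≠ B.min := by
    intro he
    obtain ⟨a, hamin⟩ := Finset.min_of_nonempty (hP.2.1 A hA)
    obtain ⟨b, hbmin⟩ := Finset.min_of_nonempty (hP.2.1 B hB)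
    have haA : a ∈ A := Finset.mem_of_min hamin
    have hbB : b ∈ B := Finset.mem_of_min hbmin
    rw [hamin, hbmin] at he
    have hab : a = b := by exact_mod_cast he
    subst hab
    exact (Finset.disjoint_left.1 (hP.2.2.1 _ hA _ hB hne) haA) hbB
  have key : ∀ {X Y : Finset V}, X ∈ P → Y ∈ P → X.min < Y.min → pidx P X < pidx P Y := by
    intro X Y hX hY hXY
    apply Finset.card_lt_card
    constructor
    · intro C hC
      simp only [mem_filter] at hC ⊢
      exact ⟨hC.1, lt_trans hC.2 hXY⟩
    · intro hcon
      have : X ∈ P.filter (fun B => B.min < Y.min) := mem_filter.2 ⟨hX, hXY⟩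
      have := hcon this
      simp only [mem_filter] at this
      exact lt_irrefl _ this.2
  rcases lt_trichotomy A.min B.min with hlt | heq | hgt
  · exact absurd h (ne_of_lt (key hA hB hlt))
  · exact hmin heq
  · exact absurd h.symm (ne_of_lt (key hB hA hgt))

end Count

section Count2
open Finset
variable {V : Type} [Fintype V] [DecidableEq V]

noncomputable def fInj [LinearOrder V] (r : ℕ) (hr : 0 < r) (P : Finset (Finset V)) : V → Fin r :=
  fun v => ⟨pidx P (partOf P v) % r, Nat.mod_lt _ hr⟩

lemma mem_iff_fInj [LinearOrder V] {r : ℕ} (hr : 0 < r) {P : Finset (Finset V)}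
    (hP : IsPartitionInto P r) {A : Finset V} (hA : A ∈ P) (v : V) :
    v ∈ A ↔ fInj r hr P v = ⟨pidx P A % r, Nat.mod_lt _ hr⟩ := by
  constructor
  · intro hv
    simp only [fInj, partOf_eq hP hA hv]
  · intro hv
    have h2 : pidx P (partOf P v) % r = pidx P A % r := congrArg Fin.val hv
    have hex : ∃ B ∈ P, v ∈ B := hP.2.2.2 v
    obtain ⟨hmem, hvmem⟩ := partOf_spec hex
    have heq : pidx P (partOf P v) = pidx P A := by
      rwa [Nat.mod_eq_of_lt (pidx_lt hP hmem), Nat.mod_eq_of_lt (pidx_lt hP hA)] at h2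
    rw [pidx_inj hP hmem hA heq] at hvmem
    exact hvmem

lemma card_le_pow_of_partitions {r : ℕ} (hr : 0 < r) (s : Finset (Finset (Finset V)))
    (hs : ∀ P ∈ s, IsPartitionInto P r) : s.card ≤ r ^ Fintype.card V := by
  letI : LinearOrder V := LinearOrder.lift' (Fintype.equivFin V) (Fintype.equivFin V).injective
  have key : ∀ (P Q : Finset (Finset V)), IsPartitionInto P r → IsPartitionInto Q r →
      fInj r hr P = fInj r hr Q → P ⊆ Q := by
    intro P Q hP hQ heq A hA
    obtain ⟨a0, ha0⟩ := hP.2.1 A hA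
    obtain ⟨B, hB, ha0B⟩ := hQ.2.2.2 a0
    have hA0 := (mem_iff_fInj hr hP hA a0).1 ha0
    have hB0 := (mem_iff_fInj hr hQ hB a0).1 ha0B
    have hAB : A = B := by
      ext v
      rw [mem_iff_fInj hr hP hA, mem_iff_fInj hr hQ hB, ← hA0, ← hB0, heq]
    rw [hAB]; exact hB
  have h := Finset.card_le_card_of_injOn (f := fInj r hr)
    (fun P _ => Finset.mem_univ _) (fun P hP Q hQ hfeq =>
      Finset.Subset.antisymm (key P Q (hs P hP) (hs Q hQ) hfeq)
        (key Q P (hs Q hQ) (hs P hP) hfeq.symm))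
  calc s.card ≤ (univ : Finset (V → Fin r)).card := h
    _ = r ^ Fintype.card V := by
      rw [Finset.card_univ, Fintype.card_fun, Fintype.card_fin]

end Count2




section Deg
open Finset
variable {V E : Type} [Fintype V] [DecidableEq V] [Fintype E]

noncomputable def mdeg (ends : E → Sym2 V) (v : V) : ℕ :=
  (univ.filter (fun e => v ∈ ends e)).card

lemma sym2_card_two {s : Sym2 V} (hs : ¬ s.IsDiag) :
    (univ.filter (fun v => v ∈ s)).card = 2 := by
  obtain ⟨⟨x, y⟩, h⟩ := Quot.exists_rep s
  have hxy : s = s(x, y) := h.symm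
  subst hxy
  have hne : x ≠ y := by
    intro h; apply hs; rw [h]; exact Sym2.isDiag_iff_proj_eq |>.2 rfl
  have : (univ.filter (fun v => v ∈ s(x, y))) = {x, y} := by
    ext v
    simp [Sym2.mem_iff]
  rw [this, Finset.card_insert_of_notMem (by simp [hne]), Finset.card_singleton]

lemma sum_mdeg (ends : E → Sym2 V) (hnd : ∀ e, ¬ (ends e).IsDiag) :
    ∑ v, mdeg ends v = 2 * Fintype.card E := by
  have h1 : ∀ v, mdeg ends v = ∑ e, if v ∈ ends e then 1 else 0 := by
    intro v; rw [mdeg, Finset.card_filter]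
  calc ∑ v, mdeg ends v = ∑ v, ∑ e, if v ∈ ends e then 1 else 0 := by
        exact Finset.sum_congr rfl (fun v _ => h1 v)
    _ = ∑ e, ∑ v, if v ∈ ends e then 1 else 0 := Finset.sum_comm
    _ = ∑ e : E, 2 := by
        refine Finset.sum_congr rfl (fun e _ => ?_)
        rw [← Finset.card_filter]
        exact sym2_card_two (hnd e)
    _ = 2 * Fintype.card E := by
        rw [Finset.sum_const, Finset.card_univ, smul_eq_mul, mul_comm]

lemma cut_le_sum_mdeg {r c : ℕ} (ends : E → Sym2 V) (hr2 : 2 ≤ r)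
    (hn : r + 1 ≤ Fintype.card V)
    (hcut : ∀ P : Finset (Finset V), IsPartitionInto P r → c ≤ rCutValue ends P)
    (S : Finset V) (hS : S.card = r - 1) :
    c ≤ ∑ v ∈ S, mdeg ends v := by
  set P : Finset (Finset V) := insert (univ \ S) (S.image fun v => ({v} : Finset V)) with hP
  have hbig : 2 ≤ (univ \ S).card := by
    rw [Finset.card_sdiff_of_subset (Finset.subset_univ S), Finset.card_univ, hS]
    omega
  have hnotmem : (univ \ S) ∉ S.image (fun v => ({v} : Finset V)) := by
    intro hmem
    obtain ⟨v, _, hv⟩ := Finset.mem_image.1 hmem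
    rw [← hv] at hbig
    simp at hbig
  have hpart : IsPartitionInto P r := by
    refine ⟨?_, ?_, ?_, ?_⟩
    · rw [hP, Finset.card_insert_of_notMem hnotmem,
        Finset.card_image_of_injective _ (fun a b h => Finset.singleton_injective h), hS]
      omega
    · intro A hA
      rw [hP, Finset.mem_insert] at hA
      rcases hA with h | h
      · subst h; exact Finset.card_pos.1 (by omega)
      · obtain ⟨v, _, hv⟩ := Finset.mem_image.1 h
        exact hv ▸ ⟨v, Finset.mem_singleton_self v⟩
    · intro A hA B hB hne
      rw [hP, Finset.mem_insert] at hA hB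
      have sing_disj : ∀ v ∈ S, Disjoint (univ \ S) ({v} : Finset V) := by
        intro v hv
        simp [Finset.disjoint_singleton_right, hv]
      rcases hA with hA | hA <;> rcases hB with hB | hB
      · exact absurd (hA.trans hB.symm) hne
      · obtain ⟨v, hvS, hv⟩ := Finset.mem_image.1 hB
        exact hA ▸ hv ▸ sing_disj v hvS
      · obtain ⟨v, hvS, hv⟩ := Finset.mem_image.1 hA
        exact (hB ▸ hv ▸ sing_disj v hvS).symm
      · obtain ⟨v, hvS, hv⟩ := Finset.mem_image.1 hA
        obtain ⟨w, hwS, hw⟩ := Finset.mem_image.1 hB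
        rw [← hv, ← hw]
        rw [Finset.disjoint_singleton_left, Finset.mem_singleton]
        intro h; subst h; exact hne (hv.symm.trans hw)
    · intro x
      by_cases hx : x ∈ S
      · exact ⟨{x}, Finset.mem_insert_of_mem (Finset.mem_image_of_mem _ hx),
          Finset.mem_singleton_self x⟩
      · exact ⟨univ \ S, Finset.mem_insert_self _ _, by simp [hx]⟩
  have hsub : rCutEdges ends P ⊆ S.biUnion (fun v => univ.filter (fun e => v ∈ ends e)) := by
    intro e he
    rw [rCutEdges, Finset.mem_filter] at he
    by_contra hmem
    apply he.2
    refine ⟨univ \ S, Finset.mem_insert_self _ _, ?_⟩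
    intro x hx
    simp only [Finset.mem_biUnion, Finset.mem_filter, Finset.mem_univ, true_and,
      not_exists, not_and] at hmem
    simp only [Finset.mem_sdiff, Finset.mem_univ, true_and]
    intro hxS
    exact hmem x hxS hx
  calc c ≤ rCutValue ends P := hcut P hpart
    _ ≤ (S.biUnion (fun v => univ.filter (fun e => v ∈ ends e))).card :=
        Finset.card_le_card hsub
    _ ≤ ∑ v ∈ S, mdeg ends v := Finset.card_biUnion_le

lemma edges_lower {r c : ℕ} (ends : E → Sym2 V) (hnd : ∀ e, ¬ (ends e).IsDiag) (hr2 : 2 ≤ r)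
    (hn : r + 1 ≤ Fintype.card V)
    (hcut : ∀ P : Finset (Finset V), IsPartitionInto P r → c ≤ rCutValue ends P) :
    (Fintype.card V - r + 2) * c ≤ 2 * Fintype.card E * (r - 1) := by
  set T : Finset V := univ.filter (fun v => (r - 1) * mdeg ends v < c) with hT
  have hTcard : T.card ≤ r - 2 := by
    by_contra hcon
    push_neg at hcon
    have h1 : r - 1 ≤ T.card := by omega
    obtain ⟨S, hSsub, hScard⟩ := Finset.exists_subset_card_eq h1
    have hSne : S.Nonempty := Finset.card_pos.1 (by omega)
    have hlt : ∑ v ∈ S, (r - 1) * mdeg ends v < ∑ v ∈ S, c := by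
      apply Finset.sum_lt_sum_of_nonempty hSne
      intro v hv
      have := hSsub hv
      rw [hT, Finset.mem_filter] at this
      exact this.2
    rw [Finset.sum_const, smul_eq_mul, hScard, ← Finset.mul_sum] at hlt
    have hge := Nat.mul_le_mul_left (r - 1) (cut_le_sum_mdeg ends hr2 hn hcut S hScard)
    omega
  have hcompl : ∀ v ∈ univ \ T, c ≤ (r - 1) * mdeg ends v := by
    intro v hv
    rw [Finset.mem_sdiff, hT, Finset.mem_filter] at hv
    push_neg at hv
    exact hv.2 (Finset.mem_univ v)
  have hcc : Fintype.card V - r + 2 ≤ (univ \ T).card := by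
    rw [Finset.card_sdiff_of_subset (Finset.subset_univ T), Finset.card_univ]
    omega
  calc (Fintype.card V - r + 2) * c ≤ (univ \ T).card * c := Nat.mul_le_mul_right c hcc
    _ = ∑ _v ∈ univ \ T, c := by rw [Finset.sum_const, smul_eq_mul]
    _ ≤ ∑ v ∈ univ \ T, (r - 1) * mdeg ends v := Finset.sum_le_sum hcompl
    _ ≤ ∑ v, (r - 1) * mdeg ends v := by
        apply Finset.sum_le_sum_of_subset (Finset.sdiff_subset)
    _ = (r - 1) * ∑ v, mdeg ends v := by rw [Finset.mul_sum]
    _ = (r - 1) * (2 * Fintype.card E) := by rw [sum_mdeg ends hnd]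
    _ = 2 * Fintype.card E * (r - 1) := by ring
end Deg

section Contract
open Finset
variable {V E : Type} [Fintype V] [DecidableEq V] [Fintype E]

lemma part_eq {r : ℕ} {P : Finset (Finset V)} (hP : IsPartitionInto P r) {A B : Finset V}
    (hA : A ∈ P) (hB : B ∈ P) {v : V} (hvA : v ∈ A) (hvB : v ∈ B) : A = B := by
  by_contra hne
  exact (Finset.disjoint_left.1 (hP.2.2.1 A hA B hB hne) hvA) hvB

variable {x y : V}

def cMap (hxy : x ≠ y) : V → {v : V // v ≠ y} :=
  fun v => if h : v = y then ⟨x, hxy⟩ else ⟨v, h⟩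

lemma cMap_id (hxy : x ≠ y) {v : V} (hv : v ≠ y) : cMap hxy v = ⟨v, hv⟩ := by
  simp only [cMap]; rw [dif_neg hv]

lemma cMap_eq_cases (hxy : x ≠ y) {u w : V} (h : cMap hxy u = cMap hxy w) :
    u = w ∨ (u = x ∧ w = y) ∨ (u = y ∧ w = x) := by
  by_cases hu : u = y
  · by_cases hw : w = y
    · exact Or.inl (hu.trans hw.symm)
    · simp only [cMap] at h
      rw [dif_pos hu, dif_neg hw] at h
      exact Or.inr (Or.inr ⟨hu, (congrArg Subtype.val h).symm⟩)
  · by_cases hw : w = y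
    · simp only [cMap] at h
      rw [dif_neg hu, dif_pos hw] at h
      exact Or.inr (Or.inl ⟨congrArg Subtype.val h, hw⟩)
    · simp only [cMap] at h
      rw [dif_neg hu, dif_neg hw] at h
      exact Or.inl (congrArg Subtype.val h)

lemma cMap_surj (hxy : x ≠ y) (v' : {v : V // v ≠ y}) : cMap hxy v'.1 = v' := by
  rw [cMap_id hxy v'.2]

lemma mem_image_cMap {r : ℕ} (hxy : x ≠ y) {P : Finset (Finset V)}
    (hP : IsPartitionInto P r) {A A0 : Finset V} (hA : A ∈ P) (hA0 : A0 ∈ P)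
    (hx : x ∈ A0) (hy : y ∈ A0) (u : V) :
    cMap hxy u ∈ A.image (cMap hxy) ↔ u ∈ A := by
  constructor
  · intro h
    obtain ⟨a, haA, hmap⟩ := Finset.mem_image.1 h
    rcases cMap_eq_cases hxy hmap with h1 | ⟨h1, h2⟩ | ⟨h1, h2⟩
    · rwa [← h1]
    · -- a = x, u = y
      subst h1; subst h2
      rwa [part_eq hP hA hA0 haA hx]
    · -- a = y, u = x
      subst h1; subst h2
      rwa [part_eq hP hA hA0 haA hy]
  · intro h; exact Finset.mem_image_of_mem _ h

def cPush (hxy : x ≠ y) (P : Finset (Finset V)) : Finset (Finset {v : V // v ≠ y}) :=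
  P.image (fun A => A.image (cMap hxy))

lemma cPush_isPartition {r : ℕ} (hxy : x ≠ y) {P : Finset (Finset V)}
    (hP : IsPartitionInto P r) {A0 : Finset V} (hA0 : A0 ∈ P) (hx : x ∈ A0) (hy : y ∈ A0) :
    IsPartitionInto (cPush hxy P) r := by
  have hinj : ∀ A ∈ P, ∀ B ∈ P, A.image (cMap hxy) = B.image (cMap hxy) → A = B := by
    intro A hA B hB h
    obtain ⟨a, ha⟩ := hP.2.1 A hA
    have : cMap hxy a ∈ B.image (cMap hxy) := h ▸ Finset.mem_image_of_mem _ ha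
    have haB : a ∈ B := (mem_image_cMap hxy hP hB hA0 hx hy a).1 this
    exact part_eq hP hA hB ha haB
  refine ⟨?_, ?_, ?_, ?_⟩
  · rw [cPush, Finset.card_image_of_injOn (fun A hA B hB h => hinj A hA B hB h), hP.1]
  · intro A' hA'
    obtain ⟨A, hA, him⟩ := Finset.mem_image.1 hA'
    obtain ⟨a, ha⟩ := hP.2.1 A hA
    exact ⟨cMap hxy a, him ▸ Finset.mem_image_of_mem _ ha⟩
  · intro A' hA' B' hB' hne
    obtain ⟨A, hA, himA⟩ := Finset.mem_image.1 hA'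
    obtain ⟨B, hB, himB⟩ := Finset.mem_image.1 hB'
    rw [Finset.disjoint_left]
    intro v' hvA' hvB'
    rw [← himA] at hvA'
    rw [← himB] at hvB'
    obtain ⟨a, haA, hmap⟩ := Finset.mem_image.1 hvA'
    rw [← hmap] at hvB'
    have haB : a ∈ B := (mem_image_cMap hxy hP hB hA0 hx hy a).1 hvB'
    exact hne (himA ▸ himB ▸ congrArg (fun C => Finset.image (cMap hxy) C)
      (part_eq hP hA hB haA haB))
  · intro v'
    obtain ⟨A, hA, hv⟩ := hP.2.2.2 v'.1
    exact ⟨A.image (cMap hxy), Finset.mem_image_of_mem _ hA,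
      cMap_surj hxy v' ▸ Finset.mem_image_of_mem _ hv⟩

def cEdge (ends : E → Sym2 V) (hxy : x ≠ y) : Type :=
  {e : E // ¬ (Sym2.map (cMap hxy) (ends e)).IsDiag}

noncomputable instance (ends : E → Sym2 V) (hxy : x ≠ y) : Fintype (cEdge ends hxy) :=
  Subtype.fintype _

def cEnds (ends : E → Sym2 V) (hxy : x ≠ y) : cEdge ends hxy → Sym2 {v : V // v ≠ y} :=
  fun e => Sym2.map (cMap hxy) (ends e.1)

lemma cEnds_nd (ends : E → Sym2 V) (hxy : x ≠ y) : ∀ e, ¬ (cEnds ends hxy e).IsDiag :=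
  fun e => e.2

lemma cPush_value {r : ℕ} (ends : E → Sym2 V) (hxy : x ≠ y) {P : Finset (Finset V)}
    (hP : IsPartitionInto P r) :
    rCutValue (cEnds ends hxy) (cPush hxy P) ≤ rCutValue ends P := by
  have hsub : (rCutEdges (cEnds ends hxy) (cPush hxy P)).image Subtype.val
      ⊆ rCutEdges ends P := by
    intro e he
    obtain ⟨e', he', hval⟩ := Finset.mem_image.1 he
    replace he' := (Finset.mem_filter (α := cEdge ends hxy)).1 he'
    rw [rCutEdges, Finset.mem_filter]
    refine ⟨Finset.mem_univ _, ?_⟩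
    intro hcon
    obtain ⟨A, hA, hall⟩ := hcon
    apply he'.2
    refine ⟨A.image (cMap hxy), Finset.mem_image_of_mem _ hA, ?_⟩
    intro z' hz'
    change z' ∈ Sym2.map (cMap hxy) (ends e'.1) at hz'
    obtain ⟨z, hz, hmap⟩ := Sym2.mem_map.1 hz'
    rw [hval] at hz
    exact hmap ▸ Finset.mem_image_of_mem _ (hall z hz)
  calc rCutValue (cEnds ends hxy) (cPush hxy P)
      = ((rCutEdges (cEnds ends hxy) (cPush hxy P)).image Subtype.val).card :=
        (Finset.card_image_of_injective _ Subtype.val_injective).symm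
    _ ≤ (rCutEdges ends P).card := Finset.card_le_card hsub

lemma cPush_recover {r : ℕ} (hxy : x ≠ y) {P : Finset (Finset V)}
    (hP : IsPartitionInto P r) {A0 : Finset V} (hA0 : A0 ∈ P) (hx : x ∈ A0) (hy : y ∈ A0) :
    (cPush hxy P).image (fun A' => Finset.univ.filter (fun v => cMap hxy v ∈ A')) = P := by
  rw [cPush, Finset.image_image]
  have : ∀ A ∈ P, (fun A' => Finset.univ.filter (fun v => cMap hxy v ∈ A'))
      ((fun A => A.image (cMap hxy)) A) = A := by
    intro A hA
    ext v
    simp only [Finset.mem_filter, Finset.mem_univ, true_and]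
    exact mem_image_cMap hxy hP hA hA0 hx hy v
  calc P.image _ = P.image id := Finset.image_congr (fun A hA => this A hA)
    _ = P := Finset.image_id

def cPull (hxy : x ≠ y) (Q' : Finset (Finset {v : V // v ≠ y})) : Finset (Finset V) :=
  Q'.image (fun A' => Finset.univ.filter (fun v => cMap hxy v ∈ A'))

lemma cPull_isPartition {r : ℕ} (hxy : x ≠ y) {Q' : Finset (Finset {v : V // v ≠ y})}
    (hQ' : IsPartitionInto Q' r) : IsPartitionInto (cPull hxy Q') r := by
  have hmem : ∀ (A' : Finset {v : V // v ≠ y}) (v' : {v : V // v ≠ y}),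
      v' ∈ A' ↔ v'.1 ∈ Finset.univ.filter (fun v => cMap hxy v ∈ A') := by
    intro A' v'
    simp only [Finset.mem_filter, Finset.mem_univ, true_and, cMap_surj hxy v']
  have hinj : ∀ A' ∈ Q', ∀ B' ∈ Q',
      Finset.univ.filter (fun v => cMap hxy v ∈ A') =
      Finset.univ.filter (fun v => cMap hxy v ∈ B') → A' = B' := by
    intro A' _ B' _ h
    ext v'
    rw [hmem A' v', hmem B' v', h]
  refine ⟨?_, ?_, ?_, ?_⟩
  · rw [cPull, Finset.card_image_of_injOn (fun A hA B hB h => hinj A hA B hB h), hQ'.1]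
  · intro A hA
    obtain ⟨A', hA', him⟩ := Finset.mem_image.1 hA
    obtain ⟨v', hv'⟩ := hQ'.2.1 A' hA'
    exact ⟨v'.1, him ▸ (hmem A' v').1 hv'⟩
  · intro A hA B hB hne
    obtain ⟨A', hA', himA⟩ := Finset.mem_image.1 hA
    obtain ⟨B', hB', himB⟩ := Finset.mem_image.1 hB
    rw [Finset.disjoint_left]
    intro v hvA hvB
    rw [← himA, Finset.mem_filter] at hvA
    rw [← himB, Finset.mem_filter] at hvB
    have hne' : A' ≠ B' := fun h => hne (himA ▸ himB ▸ h ▸ rfl)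
    exact (Finset.disjoint_left.1 (hQ'.2.2.1 A' hA' B' hB' hne') hvA.2) hvB.2
  · intro v
    obtain ⟨A', hA', hv⟩ := hQ'.2.2.2 (cMap hxy v)
    exact ⟨_, Finset.mem_image_of_mem _ hA', Finset.mem_filter.2 ⟨Finset.mem_univ _, hv⟩⟩

lemma cPull_value {r : ℕ} (ends : E → Sym2 V) (hxy : x ≠ y)
    {Q' : Finset (Finset {v : V // v ≠ y})} (hQ' : IsPartitionInto Q' r) :
    rCutValue ends (cPull hxy Q') ≤ rCutValue (cEnds ends hxy) Q' := by
  have key : ∀ e ∈ rCutEdges ends (cPull hxy Q'),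
      ∃ h : ¬ (Sym2.map (cMap hxy) (ends e)).IsDiag,
        (⟨e, h⟩ : cEdge ends hxy) ∈ rCutEdges (cEnds ends hxy) Q' := by
    intro e he
    rw [rCutEdges, Finset.mem_filter] at he
    have hcross := he.2
    have hnd : ¬ (Sym2.map (cMap hxy) (ends e)).IsDiag := by
      intro hdiag
      obtain ⟨⟨u, w⟩, hrep⟩ := Quot.exists_rep (ends e)
      have hee : ends e = s(u, w) := hrep.symm
      rw [hee, Sym2.map_pair_eq, Sym2.isDiag_iff_proj_eq] at hdiag
      -- hdiag : cMap hxy u = cMap hxy w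
      obtain ⟨A', hA', hmem⟩ := hQ'.2.2.2 (cMap hxy u)
      apply hcross
      refine ⟨_, Finset.mem_image_of_mem _ hA', ?_⟩
      intro z hz
      rw [hee, Sym2.mem_iff] at hz
      simp only [Finset.mem_filter, Finset.mem_univ, true_and]
      have hdiag' : cMap hxy u = cMap hxy w := hdiag
      rcases hz with h | h
      · rw [h]; exact hmem
      · rw [h, ← hdiag']; exact hmem
    refine ⟨hnd, ?_⟩
    apply (Finset.mem_filter (α := cEdge ends hxy)).2
    refine ⟨Finset.mem_univ _, ?_⟩
    intro hcon
    obtain ⟨A', hA', hall⟩ := hcon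
    apply hcross
    refine ⟨_, Finset.mem_image_of_mem _ hA', ?_⟩
    intro z hz
    simp only [Finset.mem_filter, Finset.mem_univ, true_and]
    apply hall
    show _ ∈ Sym2.map (cMap hxy) (ends e)
    exact Sym2.mem_map.2 ⟨z, hz, rfl⟩
  have hsub : rCutEdges ends (cPull hxy Q') ⊆
      (rCutEdges (cEnds ends hxy) Q').image Subtype.val := by
    intro e he
    obtain ⟨h, hmem⟩ := key e he
    exact Finset.mem_image.2 ⟨⟨e, h⟩, hmem, rfl⟩
  calc rCutValue ends (cPull hxy Q') ≤ ((rCutEdges (cEnds ends hxy) Q').image Subtype.val).card :=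
        Finset.card_le_card hsub
    _ = rCutValue (cEnds ends hxy) Q' := Finset.card_image_of_injective _ Subtype.val_injective

end Contract

section PerEdge
open Finset
variable {V E : Type} [Fintype V] [DecidableEq V] [Fintype E] {x y : V}

lemma card_cVert (hxy : x ≠ y) : Fintype.card {v : V // v ≠ y} = Fintype.card V - 1 := by
  rw [Fintype.card_subtype_compl, Fintype.card_subtype_eq]

lemma contract_count {r : ℕ} (ends : E → Sym2 V) (ac : ℝ) (e0 : E) (hxy : x ≠ y)
    (he0 : ends e0 = s(x, y)) :
    (Finset.univ.filter (fun P : Finset (Finset V) =>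
        (IsPartitionInto P r ∧ ((rCutValue ends P : ℝ) ≤ ac)) ∧ ¬ rCrosses ends P e0)).card
    ≤ (Finset.univ.filter (fun P' : Finset (Finset {v : V // v ≠ y}) =>
        IsPartitionInto P' r ∧ ((rCutValue (cEnds ends hxy) P' : ℝ) ≤ ac))).card := by
  have hsame : ∀ P : Finset (Finset V), IsPartitionInto P r → ¬ rCrosses ends P e0 →
      ∃ A0 ∈ P, x ∈ A0 ∧ y ∈ A0 := by
    intro P hP hcr
    rw [rCrosses, not_not] at hcr
    obtain ⟨A0, hA0, hall⟩ := hcr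
    refine ⟨A0, hA0, hall x ?_, hall y ?_⟩ <;> rw [he0, Sym2.mem_iff] <;> simp
  apply Finset.card_le_card_of_injOn (f := cPush hxy)
  · intro P hP
    rw [Finset.mem_coe, Finset.mem_filter] at hP
    obtain ⟨-, ⟨hpart, hval⟩, hcr⟩ := hP
    obtain ⟨A0, hA0, hx, hy⟩ := hsame P hpart hcr
    rw [Finset.mem_coe, Finset.mem_filter]
    refine ⟨Finset.mem_univ _, cPush_isPartition hxy hpart hA0 hx hy, ?_⟩
    calc ((rCutValue (cEnds ends hxy) (cPush hxy P) : ℝ))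
        ≤ (rCutValue ends P : ℝ) := by exact_mod_cast cPush_value ends hxy hpart
      _ ≤ ac := hval
  · intro P hP Q hQ heq
    rw [Finset.mem_coe, Finset.mem_filter] at hP hQ
    obtain ⟨-, ⟨hpartP, -⟩, hcrP⟩ := hP
    obtain ⟨-, ⟨hpartQ, -⟩, hcrQ⟩ := hQ
    obtain ⟨A0, hA0, hxP, hyP⟩ := hsame P hpartP hcrP
    obtain ⟨B0, hB0, hxQ, hyQ⟩ := hsame Q hpartQ hcrQ
    rw [← cPush_recover hxy hpartP hA0 hxP hyP, ← cPush_recover hxy hpartQ hB0 hxQ hyQ, heq]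

end PerEdge

section MainInd
open Finset

noncomputable def prodBound (r : ℕ) (β : ℝ) (b : ℕ) (n : ℕ) : ℝ :=
  (r : ℝ) ^ (r + b - 2) * ∏ j ∈ Finset.Icc (b + 1) (n - r + 2), (j : ℝ) / ((j : ℝ) - β)

lemma main_ind (r c : ℕ) (α β : ℝ) (hr2 : 2 ≤ r) (hα : 1 ≤ α)
    (hβ : β = 2 * α * ((r : ℝ) - 1)) (hc1 : 1 ≤ c) :
    ∀ n : ℕ, r + ⌈β⌉₊ - 2 ≤ n →
      ∀ (V E : Type) [Fintype V] [DecidableEq V] [Fintype E], ∀ (ends : E → Sym2 V),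
        (∀ e, ¬ (ends e).IsDiag) → Fintype.card V = n →
        (∀ P : Finset (Finset V), IsPartitionInto P r → c ≤ rCutValue ends P) →
        ((Finset.univ.filter (fun P : Finset (Finset V) =>
            IsPartitionInto P r ∧ ((rCutValue ends P : ℝ) ≤ α * c))).card : ℝ)
          ≤ prodBound r β ⌈β⌉₊ n := by
  have hr1 : (1:ℝ) ≤ (r:ℝ) - 1 := by
    have : (2:ℝ) ≤ (r:ℝ) := by exact_mod_cast hr2
    linarith
  have hβ2 : (2:ℝ) ≤ β := by
    rw [hβ]
    nlinarith
  set b := ⌈β⌉₊ with hbdef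
  have hβb : β ≤ (b:ℝ) := Nat.le_ceil β
  have hb2 : 2 ≤ b := by
    have : (2:ℝ) ≤ (b:ℝ) := le_trans hβ2 hβb
    exact_mod_cast this
  refine Nat.le_induction ?_ ?_
  · -- base case n = r + b - 2
    intro V E _ _ _ ends hnd hcard hcut
    have hempty : Finset.Icc (b + 1) (r + b - 2 - r + 2) = ∅ := by
      apply Finset.Icc_eq_empty
      omega
    rw [prodBound, hempty, Finset.prod_empty, mul_one]
    have hcount := card_le_pow_of_partitions (V := V) (r := r) (by omega)
      (Finset.univ.filter (fun P : Finset (Finset V) =>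
        IsPartitionInto P r ∧ ((rCutValue ends P : ℝ) ≤ α * c)))
      (fun P hP => (Finset.mem_filter.1 hP).2.1)
    rw [hcard] at hcount
    exact_mod_cast hcount
  · -- inductive step
    intro n hn IH V E instV instVd instE ends hnd hcard hcut
    have hrn : r ≤ n := by omega
    have hr1' : r + 1 ≤ Fintype.card V := by omega
    set m := Fintype.card E with hm
    have hedge : (Fintype.card V - r + 2) * c ≤ 2 * m * (r - 1) :=
      edges_lower ends hnd hr2 hr1' hcut
    set Jn := n + 3 - r with hJn
    have hJcard : Fintype.card V - r + 2 = Jn := by omega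
    have hJb : b + 1 ≤ Jn := by omega
    have hβJ : β < (Jn : ℝ) := by
      have : ((b:ℝ)) + 1 ≤ (Jn:ℝ) := by exact_mod_cast hJb
      linarith
    have hJpos : (0:ℝ) < (Jn:ℝ) := by linarith
    have hm1 : 1 ≤ m := by
      rcases Nat.eq_zero_or_pos m with h0 | h; swap; exact h
      rw [hJcard, h0] at hedge
      simp at hedge
      omega
    have hmpos : (0:ℝ) < (m:ℝ) := by exact_mod_cast hm1
    have hmJ : (Jn:ℝ) * (c:ℝ) ≤ 2 * (m:ℝ) * ((r:ℝ) - 1) := by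
      rw [hJcard] at hedge
      have := hedge
      have hcast : ((Jn * c : ℕ) : ℝ) ≤ ((2 * m * (r - 1) : ℕ) : ℝ) := by exact_mod_cast this
      push_cast [Nat.cast_sub (by omega : 1 ≤ r)] at hcast
      convert hcast using 1 <;> push_cast <;> ring
    have hαc : α * (c:ℝ) ≤ (m:ℝ) * β / (Jn:ℝ) := by
      rw [le_div_iff₀ hJpos]
      have h1 : ((Jn:ℝ) * c) * α ≤ (2 * (m:ℝ) * ((r:ℝ) - 1)) * α :=
        mul_le_mul_of_nonneg_right hmJ (by linarith)
      calc α * (c:ℝ) * (Jn:ℝ) = ((Jn:ℝ) * c) * α := by ring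
        _ ≤ (2 * (m:ℝ) * ((r:ℝ) - 1)) * α := h1
        _ = (m:ℝ) * β := by rw [hβ]; ring
    have hgap : (m:ℝ) * ((Jn:ℝ) - β) / (Jn:ℝ) ≤ (m:ℝ) - α * c := by
      have hexp : (m:ℝ) * ((Jn:ℝ) - β) / (Jn:ℝ) = (m:ℝ) - (m:ℝ) * β / (Jn:ℝ) := by
        field_simp
      rw [hexp]
      linarith
    have hgappos : (0:ℝ) < (m:ℝ) * ((Jn:ℝ) - β) / (Jn:ℝ) := by
      apply div_pos (mul_pos hmpos (by linarith)) hJpos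
    set PP := Finset.univ.filter (fun P : Finset (Finset V) =>
      IsPartitionInto P r ∧ ((rCutValue ends P : ℝ) ≤ α * c)) with hPPP
    have hval_le_m : ∀ P : Finset (Finset V), rCutValue ends P ≤ m := by
      intro P
      rw [rCutValue, rCutEdges, hm]
      exact le_trans (Finset.card_filter_le _ _) (le_of_eq Finset.card_univ)
    have hsum1 : (PP.card : ℝ) * ((m:ℝ) - α * c) ≤
        ∑ P ∈ PP, ((m:ℝ) - (rCutValue ends P : ℝ)) := by
      calc (PP.card : ℝ) * ((m:ℝ) - α * c) = ∑ _P ∈ PP, ((m:ℝ) - α * c) := by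
            rw [Finset.sum_const, nsmul_eq_mul]
        _ ≤ ∑ P ∈ PP, ((m:ℝ) - (rCutValue ends P : ℝ)) := by
            apply Finset.sum_le_sum
            intro P hP
            rw [hPPP, Finset.mem_filter] at hP
            linarith [hP.2.2]
    have hsum2 : ∑ P ∈ PP, ((m:ℝ) - (rCutValue ends P : ℝ)) =
        ((∑ P ∈ PP, (m - rCutValue ends P) : ℕ) : ℝ) := by
      rw [Nat.cast_sum]
      apply Finset.sum_congr rfl
      intro P hP
      rw [Nat.cast_sub (hval_le_m P)]
    have hswap : ∑ P ∈ PP, (m - rCutValue ends P) =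
        ∑ e : E, (PP.filter (fun P => ¬ rCrosses ends P e)).card := by
      have h1 : ∀ P : Finset (Finset V), m - rCutValue ends P =
          (Finset.univ.filter (fun e => ¬ rCrosses ends P e)).card := by
        intro P
        have h2 := Finset.card_filter_add_card_filter_not
          (s := (Finset.univ : Finset E)) (p := rCrosses ends P)
        rw [rCutValue, rCutEdges, hm]
        rw [Finset.card_univ] at h2
        omega
      calc ∑ P ∈ PP, (m - rCutValue ends P)
          = ∑ P ∈ PP, ∑ e : E, (if ¬ rCrosses ends P e then 1 else 0) := by
            apply Finset.sum_congr rfl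
            intro P _
            rw [h1 P, Finset.card_filter]
        _ = ∑ e : E, ∑ P ∈ PP, (if ¬ rCrosses ends P e then 1 else 0) := Finset.sum_comm
        _ = ∑ e : E, (PP.filter (fun P => ¬ rCrosses ends P e)).card := by
            apply Finset.sum_congr rfl
            intro e _
            rw [Finset.card_filter]
    have hper : ∀ e : E, ((PP.filter (fun P => ¬ rCrosses ends P e)).card : ℝ) ≤
        prodBound r β b n := by
      intro e
      obtain ⟨⟨x, y⟩, hrep⟩ := Quot.exists_rep (ends e)
      have he0 : ends e = s(x, y) := hrep.symm
      have hxy : x ≠ y := by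
        intro h
        apply hnd e
        rw [he0, h]
        exact (Sym2.isDiag_iff_proj_eq).2 rfl
      have hcount := contract_count (r := r) ends (α * c) e hxy he0
      rw [hPPP, Finset.filter_filter]
      have hIH := IH {v : V // v ≠ y} (cEdge ends hxy) (cEnds ends hxy)
        (cEnds_nd ends hxy) (by rw [card_cVert hxy, hcard]; omega) 
        (fun Q' hQ' => le_trans (hcut _ (cPull_isPartition hxy hQ'))
          (cPull_value ends hxy hQ'))
      calc ((Finset.univ.filter (fun P : Finset (Finset V) =>
              (IsPartitionInto P r ∧ ((rCutValue ends P : ℝ) ≤ α * c)) ∧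
                ¬ rCrosses ends P e)).card : ℝ)
          ≤ ((Finset.univ.filter (fun P' : Finset (Finset {v : V // v ≠ y}) =>
              IsPartitionInto P' r ∧ ((rCutValue (cEnds ends hxy) P' : ℝ) ≤ α * c))).card : ℝ) := by
            exact_mod_cast hcount
        _ ≤ prodBound r β b n := hIH
    have htotal : (PP.card : ℝ) * ((m:ℝ) - α * c) ≤ (m:ℝ) * prodBound r β b n := by
      calc (PP.card : ℝ) * ((m:ℝ) - α * c)
          ≤ ∑ P ∈ PP, ((m:ℝ) - (rCutValue ends P : ℝ)) := hsum1
        _ = ((∑ P ∈ PP, (m - rCutValue ends P) : ℕ) : ℝ) := hsum2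
        _ = ((∑ e : E, (PP.filter (fun P => ¬ rCrosses ends P e)).card : ℕ) : ℝ) := by
            rw [hswap]
        _ = ∑ e : E, ((PP.filter (fun P => ¬ rCrosses ends P e)).card : ℝ) := by
            push_cast
            rfl
        _ ≤ ∑ _e : E, prodBound r β b n := Finset.sum_le_sum (fun e _ => hper e)
        _ = (m:ℝ) * prodBound r β b n := by
            rw [Finset.sum_const, Finset.card_univ, nsmul_eq_mul, hm]
    -- conclude
    have hPB : prodBound r β b (n + 1) = prodBound r β b n * ((Jn:ℝ) / ((Jn:ℝ) - β)) := by
      have hsucc : n + 1 - r + 2 = (n - r + 2) + 1 := by omega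
      have hsucc2 : (n - r + 2) + 1 = Jn := by omega
      rw [prodBound, prodBound, hsucc, Finset.prod_Icc_succ_top (by omega : b + 1 ≤ n - r + 2 + 1),
        hsucc2, mul_assoc]
    have h1 : (PP.card : ℝ) * ((m:ℝ) * ((Jn:ℝ) - β) / (Jn:ℝ)) ≤ (m:ℝ) * prodBound r β b n :=
      le_trans (mul_le_mul_of_nonneg_left hgap (Nat.cast_nonneg _)) htotal
    have h2 : (PP.card : ℝ) ≤ ((m:ℝ) * prodBound r β b n) / ((m:ℝ) * ((Jn:ℝ) - β) / (Jn:ℝ)) :=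
      (le_div_iff₀ hgappos).2 h1
    rw [hPPP] at h2 ⊢
    calc ((Finset.univ.filter _).card : ℝ)
        ≤ ((m:ℝ) * prodBound r β b n) / ((m:ℝ) * ((Jn:ℝ) - β) / (Jn:ℝ)) := h2
      _ = prodBound r β b n * ((Jn:ℝ) / ((Jn:ℝ) - β)) := by
          have hJne : (Jn:ℝ) ≠ 0 := ne_of_gt hJpos
          have hJβne : (Jn:ℝ) - β ≠ 0 := by linarith
          rw [div_eq_iff (ne_of_gt hgappos)]
          field_simp
      _ = prodBound r β b (n + 1) := hPB.symm

end MainInd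

section Analytic
open Finset

lemma factor_le {β : ℝ} {b j : ℕ} (hb1 : 1 ≤ b) (hβ1 : 1 ≤ β) (hβb : β ≤ (b:ℝ))
    (hj : b + 1 ≤ j) :
    (j:ℝ) / ((j:ℝ) - β) ≤ ((j:ℝ) / ((j:ℝ) - (b:ℝ))) ^ (β / (b:ℝ)) := by
  have hbpos : (0:ℝ) < (b:ℝ) := by exact_mod_cast hb1
  have hjb : (b:ℝ) + 1 ≤ (j:ℝ) := by exact_mod_cast hj
  have hjpos : (0:ℝ) < (j:ℝ) := by linarith
  have hjb0 : (0:ℝ) < (j:ℝ) - b := by linarith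
  have hjβ0 : (0:ℝ) < (j:ℝ) - β := by linarith
  set t := β / (b:ℝ) with ht
  have ht0 : 0 ≤ t := by positivity
  have ht1 : t ≤ 1 := by
    rw [ht, div_le_one hbpos]
    exact hβb
  set p := ((j:ℝ) - b) / (j:ℝ) with hp
  have hppos : 0 < p := div_pos hjb0 hjpos
  have key : p ^ t ≤ ((j:ℝ) - β) / (j:ℝ) := by
    have h := Real.geom_mean_le_arith_mean2_weighted (w₁ := 1 - t) (w₂ := t)
      (p₁ := 1) (p₂ := p) (by linarith) ht0 (by norm_num) (le_of_lt hppos) (by ring)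
    rw [Real.one_rpow] at h
    have harith : (1 - t) * 1 + t * p = ((j:ℝ) - β) / (j:ℝ) := by
      rw [hp, ht]
      field_simp
      ring
    rw [harith] at h
    linarith [h]
  have hpt : 0 < p ^ t := Real.rpow_pos_of_pos hppos t
  calc (j:ℝ) / ((j:ℝ) - β) = (((j:ℝ) - β) / (j:ℝ))⁻¹ := by rw [inv_div]
    _ ≤ (p ^ t)⁻¹ := by
        apply inv_anti₀ hpt key
    _ = (p⁻¹) ^ t := (Real.inv_rpow (le_of_lt hppos) t).symm
    _ = ((j:ℝ) / ((j:ℝ) - (b:ℝ))) ^ t := by rw [hp, inv_div]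

lemma prod_ratio_eq (b : ℕ) (hb1 : 1 ≤ b) :
    ∀ J : ℕ, b ≤ J → ∏ j ∈ Finset.Icc (b+1) J, ((j:ℝ) / ((j:ℝ) - (b:ℝ)))
      = (J.descFactorial b : ℝ) / (b.factorial : ℝ) := by
  refine Nat.le_induction ?_ ?_
  · rw [Finset.Icc_eq_empty (by omega), Finset.prod_empty, Nat.descFactorial_self,
      div_self (by exact_mod_cast (Nat.factorial_pos b).ne')]
  · intro J hJ IH
    rw [Finset.prod_Icc_succ_top (by omega), IH]
    have hkey : (J+1).descFactorial b * (J + 1 - b) = (J+1) * J.descFactorial b := by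
      obtain ⟨k, rfl⟩ : ∃ k, b = k + 1 := ⟨b - 1, by omega⟩
      rw [Nat.succ_descFactorial_succ, Nat.descFactorial_succ]
      have h2 : J + 1 - (k+1) = J - k := by omega
      rw [h2]
      ring
    have hcast : ((J + 1 - b : ℕ) : ℝ) = ((J+1:ℕ):ℝ) - b := by
      have hb' : b ≤ J + 1 := by omega
      push_cast [Nat.cast_sub hb']
      ring
    have hJb0 : (0:ℝ) < ((J+1:ℕ):ℝ) - b := by
      rw [← hcast]
      have : 1 ≤ J + 1 - b := by omega
      exact_mod_cast this
    have hb!0 : ((b.factorial : ℝ)) ≠ 0 := by exact_mod_cast (Nat.factorial_pos b).ne'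
    have hkeyR : ((J+1).descFactorial b : ℝ) * (((J+1:ℕ):ℝ) - b) =
        ((J+1:ℕ):ℝ) * (J.descFactorial b : ℝ) := by
      rw [← hcast]
      exact_mod_cast congrArg (fun x : ℕ => (x:ℝ)) hkey
    rw [div_mul_div_comm, div_eq_div_iff (by positivity) hb!0]
    push_cast at hkeyR ⊢
    nlinarith [hkeyR]

end Analytic

section Endgame
open Finset

lemma pow_le_fact {r : ℕ} (hr2 : 2 ≤ r) : r ^ (r - 1) ≤ (2*r - 2).factorial := by
  have h1 : r ^ (r-1) = ∏ _i ∈ Finset.Icc r (2*r-2), r := by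
    rw [Finset.prod_const, Nat.card_Icc]
    congr 1
    omega
  rw [h1]
  calc ∏ _i ∈ Finset.Icc r (2*r-2), r ≤ ∏ i ∈ Finset.Icc r (2*r-2), i := by
        apply Finset.prod_le_prod'
        intro i hi
        exact (Finset.mem_Icc.1 hi).1
    _ ≤ ∏ i ∈ Finset.Icc 1 (2*r-2), i := by
        apply Finset.prod_le_prod_of_subset_of_one_le'
        · apply Finset.Icc_subset_Icc_left
          omega
        · intro i hi _
          exact (Finset.mem_Icc.1 hi).1
    _ = (2*r-2).factorial := by
        rw [← Finset.Ico_add_one_right_eq_Icc]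
        exact Finset.prod_Ico_id_eq_factorial _

lemma fact_pow_le {b : ℕ} (hb1 : 1 ≤ b) : ((b-1).factorial)^b ≤ (b.factorial)^(b-1) := by
  obtain ⟨k, rfl⟩ : ∃ k, b = k + 1 := ⟨b - 1, by omega⟩
  simp only [Nat.add_sub_cancel]
  calc (k.factorial)^(k+1) = (k.factorial)^k * k.factorial := by rw [pow_succ]
    _ ≤ (k.factorial)^k * (k+1)^k := by
        apply Nat.mul_le_mul_left
        calc k.factorial ≤ k ^ k := Nat.factorial_le_pow k
          _ ≤ (k+1)^k := Nat.pow_le_pow_left (by omega) k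
    _ = ((k+1) * k.factorial)^k := by rw [mul_pow, mul_comm]
    _ = ((k+1).factorial)^k := by rw [Nat.factorial_succ]

lemma fact_rpow_transfer {b : ℕ} (hb1 : 1 ≤ b) :
    (((b-1).factorial : ℕ) : ℝ) ≤ ((b.factorial : ℕ) : ℝ) ^ (((b:ℝ) - 1)/(b:ℝ)) := by
  have hbpos : (0:ℝ) < (b:ℝ) := by exact_mod_cast hb1
  have hx : (0:ℝ) ≤ (((b-1).factorial : ℕ) : ℝ) := by positivity
  have hy : (0:ℝ) ≤ ((b.factorial : ℕ) : ℝ) := by positivity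
  have hℕ : ((((b-1).factorial)^b : ℕ) : ℝ) ≤ (((b.factorial)^(b-1) : ℕ) : ℝ) := by
    exact_mod_cast fact_pow_le hb1
  push_cast at hℕ
  have h2 : ((((b-1).factorial : ℕ) : ℝ) ^ (b:ℕ)) ^ ((1:ℝ)/(b:ℝ)) ≤
      ((((b.factorial : ℕ) : ℝ)) ^ ((b-1:ℕ))) ^ ((1:ℝ)/(b:ℝ)) := by
    apply Real.rpow_le_rpow (by positivity) hℕ (by positivity)
  calc (((b-1).factorial : ℕ) : ℝ)
      = ((((b-1).factorial : ℕ) : ℝ) ^ (b:ℕ)) ^ ((1:ℝ)/(b:ℝ)) := by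
        rw [← Real.rpow_natCast (((b-1).factorial : ℕ) : ℝ) b, ← Real.rpow_mul hx]
        rw [mul_one_div, div_self (ne_of_gt hbpos), Real.rpow_one]
    _ ≤ ((((b.factorial : ℕ) : ℝ)) ^ ((b-1:ℕ))) ^ ((1:ℝ)/(b:ℝ)) := h2
    _ = ((b.factorial : ℕ) : ℝ) ^ (((b:ℝ) - 1)/(b:ℝ)) := by
        rw [← Real.rpow_natCast ((b.factorial : ℕ) : ℝ) (b-1), ← Real.rpow_mul hy]
        congr 1
        rw [Nat.cast_sub hb1]
        push_cast
        ring

lemma prodBound_le (r b n : ℕ) (β : ℝ) (hr2 : 2 ≤ r) (hb2 : 2 ≤ b) (hβ2 : 2 ≤ β)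
    (hβb : β ≤ (b:ℝ)) (hbβ : (b:ℝ) ≤ β + 1) (h2r : 2*((r:ℝ)-1) ≤ β)
    (hn : r + b - 2 ≤ n) :
    prodBound r β b n ≤ ((r * n : ℕ) : ℝ) ^ β := by
  have hr1 : (1:ℝ) ≤ (r:ℝ) := by exact_mod_cast le_trans (by norm_num) hr2
  have hb1 : (1:ℝ) ≤ (b:ℝ) := by exact_mod_cast le_trans (by norm_num) hb2
  have hbpos : (0:ℝ) < (b:ℝ) := by linarith
  set J := n - r + 2 with hJ
  have hJb : b ≤ J := by omega
  have hJn : J ≤ n := by omega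
  set t := β / (b:ℝ) with ht
  have ht0 : 0 ≤ t := by positivity
  have htb : (b:ℝ) * t = β := by rw [ht]; field_simp
  have hfac_pos : (0:ℝ) < ((b.factorial : ℕ) : ℝ) := by exact_mod_cast Nat.factorial_pos b
  have hfac1 : (1:ℝ) ≤ ((b.factorial : ℕ) : ℝ) := by
    exact_mod_cast Nat.one_le_iff_ne_zero.2 (Nat.factorial_pos b).ne'
  have hnonneg : ∀ j ∈ Finset.Icc (b+1) J, (0:ℝ) ≤ (j:ℝ) / ((j:ℝ) - (b:ℝ)) := by
    intro j hj
    have hj' := (Finset.mem_Icc.1 hj).1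
    have hjb : ((b:ℝ)) + 1 ≤ (j:ℝ) := by exact_mod_cast hj'
    apply div_nonneg (by linarith) (by linarith)
  have S1 : ∏ j ∈ Finset.Icc (b+1) J, ((j:ℝ) / ((j:ℝ) - β))
      ≤ ((J:ℝ) ^ β) / ((b.factorial : ℕ) : ℝ) ^ t := by
    have hA : ∏ j ∈ Finset.Icc (b+1) J, ((j:ℝ) / ((j:ℝ) - β))
        ≤ ∏ j ∈ Finset.Icc (b+1) J, ((j:ℝ) / ((j:ℝ) - (b:ℝ))) ^ t := by
      apply Finset.prod_le_prod
      · intro j hj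
        have hj' := (Finset.mem_Icc.1 hj).1
        have hjb : ((b:ℝ)) + 1 ≤ (j:ℝ) := by exact_mod_cast hj'
        apply div_nonneg (by linarith) (by linarith)
      · intro j hj
        exact factor_le (by omega) (by linarith) hβb (Finset.mem_Icc.1 hj).1
    have hB : ∏ j ∈ Finset.Icc (b+1) J, ((j:ℝ) / ((j:ℝ) - (b:ℝ))) ^ t
        = (∏ j ∈ Finset.Icc (b+1) J, ((j:ℝ) / ((j:ℝ) - (b:ℝ)))) ^ t :=
      Real.finset_prod_rpow _ _ hnonneg t
    have hdF : ((J.descFactorial b : ℕ) : ℝ) ≤ (J:ℝ) ^ (b:ℕ) := by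
      exact_mod_cast Nat.descFactorial_le_pow J b
    have hC : (∏ j ∈ Finset.Icc (b+1) J, ((j:ℝ) / ((j:ℝ) - (b:ℝ)))) ^ t
        ≤ (((J:ℝ) ^ (b:ℕ)) / ((b.factorial : ℕ) : ℝ)) ^ t := by
      rw [prod_ratio_eq b (by omega) J hJb]
      apply Real.rpow_le_rpow (by positivity) _ ht0
      exact (div_le_div_iff_of_pos_right hfac_pos).2 hdF
    have hD : (((J:ℝ) ^ (b:ℕ)) / ((b.factorial : ℕ) : ℝ)) ^ t
        = ((J:ℝ) ^ β) / ((b.factorial : ℕ) : ℝ) ^ t := by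
      rw [Real.div_rpow (by positivity) (le_of_lt hfac_pos)]
      congr 1
      rw [← Real.rpow_natCast (J:ℝ) b, ← Real.rpow_mul (Nat.cast_nonneg J), htb]
    exact le_trans hA (le_trans (le_of_eq hB) (le_trans hC (le_of_eq hD)))
  have S2 : (r:ℝ) ^ (r + b - 2 : ℕ) ≤ (r:ℝ) ^ β * ((b.factorial : ℕ) : ℝ) ^ t := by
    rcases eq_or_lt_of_le hβb with heq | hlt
    · have htone : t = 1 := by rw [ht, heq, div_self (ne_of_gt hbpos)]
      rw [htone, Real.rpow_one, heq, Real.rpow_natCast]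
      have h2rb : 2*r - 2 ≤ b := by
        have h1 : (2*(r:ℝ) - 2) ≤ (b:ℝ) := by rw [← heq]; linarith
        have h2 : ((2*r - 2 : ℕ) : ℝ) = 2*(r:ℝ) - 2 := by
          push_cast [Nat.cast_sub (by omega : 2 ≤ 2*r)]
          ring
        exact_mod_cast h2 ▸ h1
      have hNat : r ^ (r + b - 2) ≤ r ^ b * b.factorial := by
        have hsplit : r + b - 2 = b + (r - 2) := by omega
        rw [hsplit, pow_add]
        apply Nat.mul_le_mul_left
        calc r ^ (r-2) ≤ r ^ (r-1) := Nat.pow_le_pow_right (by omega) (by omega)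
          _ ≤ (2*r-2).factorial := pow_le_fact hr2
          _ ≤ b.factorial := Nat.factorial_le h2rb
      exact_mod_cast hNat
    · have hb2r : 2*r - 2 ≤ b - 1 := by
        have h1 : (2*(r:ℝ) - 2) < (b:ℝ) := by linarith
        have h2 : ((2*r - 2 : ℕ) : ℝ) = 2*(r:ℝ) - 2 := by
          push_cast [Nat.cast_sub (by omega : 2 ≤ 2*r)]
          ring
        have h3 : ((2*r - 2 : ℕ) : ℝ) < (b:ℝ) := h2 ▸ h1
        have h4 : 2*r - 2 < b := by exact_mod_cast h3
        omega
      have hsplit : r + b - 2 = (r - 1) + (b - 1) := by omega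
      rw [hsplit, pow_add]
      have hx1 : (r:ℝ) ^ (r-1 : ℕ) ≤ ((b.factorial : ℕ):ℝ) ^ t := by
        calc (r:ℝ) ^ (r-1:ℕ) ≤ (((2*r-2).factorial : ℕ) : ℝ) := by
              exact_mod_cast pow_le_fact hr2
          _ ≤ (((b-1).factorial : ℕ) : ℝ) := by
              exact_mod_cast Nat.factorial_le hb2r
          _ ≤ ((b.factorial : ℕ) : ℝ) ^ (((b:ℝ)-1)/(b:ℝ)) := fact_rpow_transfer (by omega)
          _ ≤ ((b.factorial : ℕ) : ℝ) ^ t := by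
              apply Real.rpow_le_rpow_of_exponent_le hfac1
              rw [ht]
              exact (div_le_div_iff_of_pos_right hbpos).2 (by linarith)
      have hx2 : (r:ℝ) ^ (b-1 : ℕ) ≤ (r:ℝ) ^ β := by
        rw [← Real.rpow_natCast (r:ℝ) (b-1)]
        apply Real.rpow_le_rpow_of_exponent_le hr1
        have hcast : ((b-1:ℕ):ℝ) = (b:ℝ) - 1 := by
          push_cast [Nat.cast_sub (by omega : 1 ≤ b)]
          ring
        rw [hcast]
        linarith
      calc (r:ℝ)^(r-1:ℕ) * (r:ℝ)^(b-1:ℕ) ≤ ((b.factorial:ℕ):ℝ)^t * (r:ℝ)^β :=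
            mul_le_mul hx1 hx2 (by positivity) (by positivity)
        _ = (r:ℝ)^β * ((b.factorial:ℕ):ℝ)^t := by ring
  have hJβ : (J:ℝ)^β ≤ (n:ℝ)^β :=
    Real.rpow_le_rpow (Nat.cast_nonneg J) (by exact_mod_cast hJn) (by linarith)
  have hprod_nonneg : (0:ℝ) ≤ ∏ j ∈ Finset.Icc (b+1) J, ((j:ℝ) / ((j:ℝ) - β)) := by
    apply Finset.prod_nonneg
    intro j hj
    have hj' := (Finset.mem_Icc.1 hj).1
    have hjb : ((b:ℝ)) + 1 ≤ (j:ℝ) := by exact_mod_cast hj'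
    apply div_nonneg (by linarith) (by linarith)
  calc prodBound r β b n
      ≤ ((r:ℝ)^β * ((b.factorial:ℕ):ℝ)^t) * (((J:ℝ)^β) / ((b.factorial:ℕ):ℝ)^t) := by
        rw [prodBound]
        exact mul_le_mul S2 S1 hprod_nonneg (by positivity)
    _ = (r:ℝ)^β * (J:ℝ)^β := by
        have hftne : ((b.factorial:ℕ):ℝ)^t ≠ 0 := ne_of_gt (Real.rpow_pos_of_pos hfac_pos t)
        field_simp
    _ ≤ (r:ℝ)^β * (n:ℝ)^β := by
        apply mul_le_mul_of_nonneg_left hJβ (by positivity)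
    _ = ((r:ℝ) * (n:ℝ))^β := (Real.mul_rpow (by positivity) (by positivity)).symm
    _ = ((r*n:ℕ):ℝ)^β := by
        congr 1
        push_cast
        ring

lemma small_n (r n : ℕ) (β : ℝ) (hr2 : 2 ≤ r) (hβ2 : 2 ≤ β) (h2r : 2*((r:ℝ)-1) ≤ β)
    (hrn : r ≤ n) (hnβ : (n:ℝ) ≤ (r:ℝ) + β - 1) :
    ((r:ℕ):ℝ) ^ (n:ℕ) ≤ ((r * n : ℕ) : ℝ) ^ β := by
  have hr1 : (1:ℝ) ≤ (r:ℝ) := by exact_mod_cast le_trans (by norm_num) hr2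
  have hrpos : (0:ℝ) < (r:ℝ) := by linarith
  have hn2 : (2:ℝ) ≤ (n:ℝ) := by exact_mod_cast le_trans hr2 hrn
  have hrn' : (r:ℝ) ≤ (n:ℝ) := by exact_mod_cast hrn
  have hrnn : (r:ℝ) ≤ (r:ℝ) * (n:ℝ) := by nlinarith
  have hcast : ((r*n:ℕ):ℝ) = (r:ℝ) * (n:ℝ) := by push_cast; ring
  rcases le_or_gt ((n:ℕ):ℝ) β with h | h
  · calc ((r:ℕ):ℝ) ^ (n:ℕ) = (r:ℝ) ^ ((n:ℕ):ℝ) := (Real.rpow_natCast _ _).symm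
      _ ≤ (r:ℝ) ^ β := Real.rpow_le_rpow_of_exponent_le hr1 h
      _ ≤ ((r:ℝ) * (n:ℝ)) ^ β := Real.rpow_le_rpow (by positivity) hrnn (by linarith)
      _ = ((r*n:ℕ):ℝ) ^ β := by rw [hcast]
  · have hsplit : (r:ℝ) ^ ((n:ℕ):ℝ) = (r:ℝ) ^ β * (r:ℝ) ^ (((n:ℕ):ℝ) - β) := by
      rw [← Real.rpow_add hrpos]
      congr 1
      ring
    have hx1 : (r:ℝ) ^ (((n:ℕ):ℝ) - β) ≤ (r:ℝ) ^ ((r:ℝ) - 1) :=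
      Real.rpow_le_rpow_of_exponent_le hr1 (by linarith)
    have hx2 : (r:ℝ) ^ ((r:ℝ) - 1) ≤ (n:ℝ) ^ ((r:ℝ) - 1) :=
      Real.rpow_le_rpow (by positivity) hrn' (by linarith)
    have hx3 : (n:ℝ) ^ ((r:ℝ) - 1) ≤ (n:ℝ) ^ β :=
      Real.rpow_le_rpow_of_exponent_le (by linarith) (by linarith)
    calc ((r:ℕ):ℝ) ^ (n:ℕ) = (r:ℝ) ^ ((n:ℕ):ℝ) := (Real.rpow_natCast _ _).symm
      _ = (r:ℝ) ^ β * (r:ℝ) ^ (((n:ℕ):ℝ) - β) := hsplit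
      _ ≤ (r:ℝ) ^ β * (n:ℝ) ^ β := by
          apply mul_le_mul_of_nonneg_left (le_trans hx1 (le_trans hx2 hx3)) (by positivity)
      _ = ((r:ℝ) * (n:ℝ)) ^ β := (Real.mul_rpow (by positivity) (by positivity)).symm
      _ = ((r*n:ℕ):ℝ) ^ β := by rw [hcast]

end Endgame


section Conn
open Finset
variable {V E : Type} [Fintype V] [DecidableEq V] [Fintype E]

lemma one_le_cut {r : ℕ} (ends : E → Sym2 V) (hr2 : 2 ≤ r)
    (hconn : (survGraph ends (∅ : Finset E)).Connected)
    {P : Finset (Finset V)} (hP : IsPartitionInto P r) : 1 ≤ rCutValue ends P := by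
  by_contra h
  push_neg at h
  have h0 : rCutValue ends P = 0 := by omega
  have hnc : ∀ e : E, ¬ rCrosses ends P e := by
    intro e hcr
    have hmem : e ∈ rCutEdges ends P := Finset.mem_filter.2 ⟨Finset.mem_univ _, hcr⟩
    rw [rCutValue, Finset.card_eq_zero] at h0
    rw [h0] at hmem
    exact absurd hmem (Finset.notMem_empty e)
  have hadj : ∀ u v : V, (survGraph ends (∅ : Finset E)).Adj u v →
      ∀ A ∈ P, u ∈ A → v ∈ A := by
    intro u v huv A hA hu
    rw [survGraph, SimpleGraph.fromRel_adj] at huv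
    obtain ⟨hne, hrel⟩ := huv
    have key : ∀ (e : E) (a b2 : V), ends e = s(a, b2) → a ∈ A → b2 ∈ A := by
      intro e a b2 hee ha
      have hninc := hnc e
      rw [rCrosses, not_not] at hninc
      obtain ⟨B, hB, hall⟩ := hninc
      have haB : a ∈ B := hall a (by rw [hee, Sym2.mem_iff]; left; rfl)
      have hbB : b2 ∈ B := hall b2 (by rw [hee, Sym2.mem_iff]; right; rfl)
      have hBA : B = A := part_eq hP hB hA haB ha
      rw [← hBA]
      exact hbB
    rcases hrel with ⟨e, _, hee⟩ | ⟨e, _, hee⟩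
    · exact key e u v hee hu
    · exact key e u v (hee.trans (Sym2.eq_swap)) hu
  have hwalk : ∀ (u v2 : V) (w : (survGraph ends (∅ : Finset E)).Walk u v2),
      ∀ A ∈ P, u ∈ A → v2 ∈ A := by
    intro u v2 w
    induction w with
    | nil => intro A hA hu; exact hu
    | cons hadj' p ih =>
        intro A hA hu
        exact ih A hA (hadj _ _ hadj' A hA hu)
  have hcard2 : 1 < P.card := by rw [hP.1]; omega
  obtain ⟨A, hA, B, hB, hAB⟩ := Finset.one_lt_card.1 hcard2
  obtain ⟨a, ha⟩ := hP.2.1 A hA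
  obtain ⟨b2, hb2⟩ := hP.2.1 B hB
  obtain ⟨w⟩ := hconn.preconnected a b2
  have hb2A := hwalk a b2 w A hA ha
  exact hAB (part_eq hP hA hB hb2A hb2)

end Conn

theorem stmt8' {V E : Type} [Fintype V] [DecidableEq V] [Fintype E]
    (ends : E → Sym2 V) (hnd : ∀ e, ¬ (ends e).IsDiag)
    (hn : 2 ≤ Fintype.card V)
    (hconn : (survGraph ends (∅ : Finset E)).Connected)
    (r : ℕ) (hr2 : 2 ≤ r) (hrn : r ≤ Fintype.card V)
    (cr : ℕ)
    (hmin : ∀ P : Finset (Finset V), IsPartitionInto P r → cr ≤ rCutValue ends P)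
    (hex : ∃ P : Finset (Finset V), IsPartitionInto P r ∧ rCutValue ends P = cr)
    (α : ℝ) (hα : 1 ≤ α) :
    ((Finset.univ.filter (fun P : Finset (Finset V) =>
        IsPartitionInto P r ∧ (rCutValue ends P : ℝ) ≤ α * cr)).card : ℝ)
      ≤ ((r * Fintype.card V : ℕ) : ℝ) ^ (2 * α * ((r : ℝ) - 1)) := by
  set n := Fintype.card V with hndef
  set β := 2 * α * ((r : ℝ) - 1) with hβdef
  have hrR : (2:ℝ) ≤ (r:ℝ) := by exact_mod_cast hr2
  have h2r : 2*((r:ℝ)-1) ≤ β := by rw [hβdef]; nlinarith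
  have hβ2 : (2:ℝ) ≤ β := by nlinarith
  set b := ⌈β⌉₊ with hbdef
  have hβb : β ≤ (b:ℝ) := Nat.le_ceil β
  have hbβ : (b:ℝ) ≤ β + 1 := le_of_lt (Nat.ceil_lt_add_one (by linarith))
  have hb2 : 2 ≤ b := by
    have : (2:ℝ) ≤ (b:ℝ) := le_trans hβ2 hβb
    exact_mod_cast this
  have hc1 : 1 ≤ cr := by
    obtain ⟨P, hPp, hPv⟩ := hex
    rw [← hPv]
    exact one_le_cut ends hr2 hconn hPp
  by_cases hcase : r + b - 2 ≤ n
  · calc ((Finset.univ.filter (fun P : Finset (Finset V) =>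
        IsPartitionInto P r ∧ (rCutValue ends P : ℝ) ≤ α * cr)).card : ℝ)
        ≤ prodBound r β b n :=
          main_ind r cr α β hr2 hα hβdef hc1 n hcase V E ends hnd hndef.symm hmin
      _ ≤ ((r * n : ℕ) : ℝ) ^ β := prodBound_le r b n β hr2 hb2 hβ2 hβb hbβ h2r hcase
  · push_neg at hcase
    have hcount := card_le_pow_of_partitions (V := V) (r := r) (by omega)
      (Finset.univ.filter (fun P : Finset (Finset V) =>
        IsPartitionInto P r ∧ ((rCutValue ends P : ℝ) ≤ α * cr)))
      (fun P hP => (Finset.mem_filter.1 hP).2.1)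
    have hnβ : (n:ℝ) ≤ (r:ℝ) + β - 1 := by
      have h1 : n + 3 ≤ r + b := by omega
      have h2 : ((n:ℝ)) + 3 ≤ (r:ℝ) + (b:ℝ) := by exact_mod_cast h1
      linarith
    calc ((Finset.univ.filter (fun P : Finset (Finset V) =>
        IsPartitionInto P r ∧ (rCutValue ends P : ℝ) ≤ α * cr)).card : ℝ)
        ≤ ((r ^ n : ℕ) : ℝ) := by exact_mod_cast hcount
      _ = ((r:ℕ):ℝ) ^ (n:ℕ) := by push_cast; ring
      _ ≤ ((r * n : ℕ) : ℝ) ^ β := small_n r n β hr2 hβ2 h2r hrn hnβ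

/-- Let `G` be a connected multigraph on `n ≥ 2` vertices, `r` an integer with
`2 ≤ r ≤ n`, `cr` its minimum `r`-way cut value, and `α ≥ 1` a real number.  Then the number of
distinct `α`-minimum `r`-way cuts of `G` (those of value at most `α * cr`) is at most
`(r n) ^ (2 α (r - 1))`. -/
theorem stmt8 {V E : Type} [Fintype V] [DecidableEq V] [Fintype E]
    (ends : E → Sym2 V) (hnd : ∀ e, ¬ (ends e).IsDiag)
    (hn : 2 ≤ Fintype.card V)
    (hconn : (survGraph ends (∅ : Finset E)).Connected)
    (r : ℕ) (hr2 : 2 ≤ r) (hrn : r ≤ Fintype.card V)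
    (cr : ℕ)
    (hmin : ∀ P : Finset (Finset V), IsPartitionInto P r → cr ≤ rCutValue ends P)
    (hex : ∃ P : Finset (Finset V), IsPartitionInto P r ∧ rCutValue ends P = cr)
    (α : ℝ) (hα : 1 ≤ α) :
    ((Finset.univ.filter (fun P : Finset (Finset V) =>
        IsPartitionInto P r ∧ (rCutValue ends P : ℝ) ≤ α * cr)).card : ℝ)
      ≤ ((r * Fintype.card V : ℕ) : ℝ) ^ (2 * α * ((r : ℝ) - 1)) := by
  exact stmt8' ends hnd hn hconn r hr2 hrn cr hmin hex α hα
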